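/- Let r : ℝ → ℝ be twice differentiable with r'(τ) > 0 and r''(τ) > 0 for all τ ≥ 0, and let c : ℝ → ℝ be continuous with c(τ) ≥ r'(τ)²/r''(τ) for all τ ≥ 0. Assume the function τ ↦ 1/c(τ) is integrable on (u, ∞) with F(u) := ∫_{(u,∞)} 1/c(τ) dτ > 0 for every u ≥ 0. Define s(t) := r(0) + ∫_0^t F(u)⁻¹ du. Then s(t) ≥ r(t) for all t ≥ 0. -/

import Mathlib

open MeasureTheory Filter Set Topology

/-- The concluding estimate `s(t) ≥ r(t)` in the proof of existence of admissible
functions, where `s(t) = r(0) + ∫_0^t (∫_u^∞ dτ/c(τ))⁻¹ du`. -/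
theorem background_cohomology_admissible_dominates
    (r r' r'' : ℝ → ℝ)
    (hr : ∀ τ : ℝ, HasDerivAt r (r' τ) τ)
    (hr' : ∀ τ : ℝ, HasDerivAt r' (r'' τ) τ)
    (hr'pos : ∀ τ ≥ (0 : ℝ), 0 < r' τ)
    (hr''pos : ∀ τ ≥ (0 : ℝ), 0 < r'' τ)
    (c : ℝ → ℝ) (hc : Continuous c)
    (hcge : ∀ τ ≥ (0 : ℝ), r' τ ^ 2 / r'' τ ≤ c τ)
    (hint : ∀ u ≥ (0 : ℝ), IntegrableOn (fun τ => 1 / c τ) (Set.Ioi u))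
    (F : ℝ → ℝ) (hFdef : ∀ u, F u = ∫ τ in Set.Ioi u, 1 / c τ)
    (hFpos : ∀ u ≥ (0 : ℝ), 0 < F u)
    (s : ℝ → ℝ) (hs : ∀ t, s t = r 0 + ∫ u in (0 : ℝ)..t, (F u)⁻¹) :
    ∀ t ≥ (0 : ℝ), r t ≤ s t := by
  have hr'cont : Continuous r' := (Differentiable.continuous fun x => (hr' x).differentiableAt)
  have hcpos : ∀ τ ≥ (0 : ℝ), 0 < c τ := fun τ hτ =>
    lt_of_lt_of_le (div_pos (pow_pos (hr'pos τ hτ) 2) (hr''pos τ hτ)) (hcge τ hτ)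
  have hmeas : Measurable fun τ => 1 / c τ := by
    simpa [one_div] using hc.measurable.fun_inv
  -- pointwise bound 1/c ≤ r''/r'^2
  have hptwise : ∀ τ ≥ (0 : ℝ), 1 / c τ ≤ r'' τ / r' τ ^ 2 := by
    intro τ hτ
    have h1 : 1 / c τ ≤ 1 / (r' τ ^ 2 / r'' τ) :=
      one_div_le_one_div_of_le (div_pos (pow_pos (hr'pos τ hτ) 2) (hr''pos τ hτ)) (hcge τ hτ)
    rwa [one_div_div] at h1
  -- key estimate: F u ≤ (r' u)⁻¹
  have key : ∀ u ≥ (0 : ℝ), F u ≤ (r' u)⁻¹ := by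
    intro u hu
    have htend : Tendsto (fun T => ∫ τ in u..T, 1 / c τ) atTop (𝓝 (F u)) := by
      rw [hFdef]
      exact intervalIntegral_tendsto_integral_Ioi u (hint u hu) tendsto_id
    refine le_of_tendsto htend ?_
    filter_upwards [eventually_ge_atTop u] with T hT
    -- show ∫_u^T 1/c ≤ (r' u)⁻¹ via antitonicity of
    -- φ x = (r' x)⁻¹ + ∫_u^x 1/c on [u, T]
    set φ : ℝ → ℝ := fun x => (r' x)⁻¹ + ∫ τ in u..x, 1 / c τ with hφ
    have hIint : IntegrableOn (fun τ => 1 / c τ) (uIcc u T) := by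
      rw [uIcc_of_le hT, integrableOn_Icc_iff_integrableOn_Ioc]
      exact (hint u hu).mono_set Ioc_subset_Ioi_self
    have hφcont : ContinuousOn φ (Icc u T) := by
      apply ContinuousOn.add
      · exact (hr'cont.continuousOn).inv₀ fun x hx =>
          (hr'pos x (le_trans hu hx.1)).ne'
      · have := intervalIntegral.continuousOn_primitive_interval (a := u) (b := T) (f := fun τ => 1 / c τ)
          (μ := volume) hIint
        rwa [uIcc_of_le hT] at this
    have hφderiv : ∀ x ∈ Ioo u T,
        HasDerivAt φ (-(r'' x / r' x ^ 2) + 1 / c x) x := by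
      intro x hx
      have hx0 : (0:ℝ) ≤ x := le_trans hu hx.1.le
      have h1 : HasDerivAt (fun y => (r' y)⁻¹) (-(r'' x / r' x ^ 2)) x := by
        have := (hr' x).fun_inv (hr'pos x hx0).ne'
        simpa [div_eq_mul_inv, pow_two, mul_inv] using this
      have h2 : HasDerivAt (fun y => ∫ τ in u..y, 1 / c τ) (1 / c x) x := by
        refine intervalIntegral.integral_hasDerivAt_right ?_ ?_ ?_
        · refine (hIint.mono_set ?_).intervalIntegrable
          rw [uIcc_of_le hT]
          exact uIcc_subset_Icc ⟨le_refl u, hT⟩ ⟨hx.1.le, hx.2.le⟩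
        · exact hmeas.stronglyMeasurable.stronglyMeasurableAtFilter
        · exact (continuousAt_const.div hc.continuousAt (hcpos x hx0).ne')
      exact h1.add h2
    have hanti : AntitoneOn φ (Icc u T) := by
      refine antitoneOn_of_deriv_nonpos (convex_Icc u T) hφcont ?_ ?_
      · intro x hx
        rw [interior_Icc] at hx
        exact ((hφderiv x hx).differentiableAt).differentiableWithinAt
      · intro x hx
        rw [interior_Icc] at hx
        have hx0 : (0:ℝ) ≤ x := le_trans hu hx.1.le
        rw [(hφderiv x hx).deriv]
        have := hptwise x hx0
        linarith
    have hφle : φ T ≤ φ u := by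
      rcases eq_or_lt_of_le hT with h | h
      · rw [h]
      · exact hanti ⟨le_refl u, hT⟩ ⟨hT, le_refl T⟩ hT
    have hφu : φ u = (r' u)⁻¹ := by simp [hφ]
    have hTpos : 0 < (r' T)⁻¹ := inv_pos.2 (hr'pos T (le_trans hu hT))
    have : (r' T)⁻¹ + ∫ τ in u..T, 1 / c τ ≤ (r' u)⁻¹ := by
      rw [← hφu]; exact hφle
    linarith
  -- deduce r' u ≤ (F u)⁻¹ for u ≥ 0
  have hkey' : ∀ u ≥ (0 : ℝ), r' u ≤ (F u)⁻¹ := by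
    intro u hu
    have h1 : F u ≤ (r' u)⁻¹ := key u hu
    have h2 : 0 < F u := hFpos u hu
    have h3 : 0 < r' u := hr'pos u hu
    rw [← inv_inv (r' u)]
    exact inv_anti₀ h2 h1
  -- F is antitone on [0, ∞), hence (F ·)⁻¹ monotone, hence interval integrable
  intro t ht
  have hFanti : AntitoneOn F (Icc (0:ℝ) t) := by
    intro a ha b hb hab
    rw [hFdef a, hFdef b]
    have hsub : Ioi b ⊆ Ioi a := Ioi_subset_Ioi hab
    refine setIntegral_mono_set (hint a ha.1) ?_ (HasSubset.Subset.eventuallyLE hsub)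
    filter_upwards [ae_restrict_mem measurableSet_Ioi] with x hx
    exact le_of_lt (div_pos one_pos (hcpos x (le_trans ha.1 (le_of_lt hx))))
  have hFinvmono : MonotoneOn (fun u => (F u)⁻¹) (Icc (0:ℝ) t) := by
    intro a ha b hb hab
    exact inv_anti₀ (hFpos b (le_trans ha.1 hab)) (hFanti ha hb hab)
  have hFinvint : IntervalIntegrable (fun u => (F u)⁻¹) volume 0 t := by
    apply MonotoneOn.intervalIntegrable
    rwa [uIcc_of_le ht]
  have hr'int : IntervalIntegrable r' volume 0 t := hr'cont.intervalIntegrable 0 t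
  have hmono : ∫ u in (0:ℝ)..t, r' u ≤ ∫ u in (0:ℝ)..t, (F u)⁻¹ := by
    apply intervalIntegral.integral_mono_on ht hr'int hFinvint
    intro x hx
    exact hkey' x hx.1
  have hftc : ∫ u in (0:ℝ)..t, r' u = r t - r 0 := by
    apply intervalIntegral.integral_eq_sub_of_hasDerivAt
    · intro x _
      exact hr x
    · exact hr'cont.intervalIntegrable 0 t
  rw [hs t]
  linarith
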